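/- K_{3,3} is a bipartite minor of the barycentric subdivision of K_{3,3}, that is, of the bipartite graph obtained from K_{3,3} by subdividing every edge exactly once, with the bipartition in which the six original vertices form one side and the nine subdivision vertices form the other side. -/

import Mathlib

/-- A finite simple graph with vertex set a finite subset of `ℕ`. -/
structure NatGraph where
  verts : Finset ℕ
  Adj : ℕ → ℕ → Prop
  symm : ∀ ⦃x y⦄, Adj x y → Adj y x
  loopless : ∀ x, ¬ Adj x x
  mem_of_adj : ∀ ⦃x y⦄, Adj x y → x ∈ verts ∧ y ∈ verts

namespace NatGraph

/-- The underlying `SimpleGraph` on `ℕ`. -/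
def toSimpleGraph (G : NatGraph) : SimpleGraph ℕ where
  Adj := G.Adj
  symm := ⟨fun _ _ h => G.symm h⟩
  loopless := ⟨fun x h => G.loopless x h⟩

/-- A graph is bipartite if its vertices can be properly 2-colored. -/
def IsBipartite (G : NatGraph) : Prop :=
  ∃ c : ℕ → Bool, ∀ ⦃x y⦄, G.Adj x y → c x ≠ c y

/-- Delete a set of vertices (and all incident edges). -/
def deleteVerts (G : NatGraph) (S : Finset ℕ) : NatGraph where
  verts := G.verts \ S
  Adj x y := G.Adj x y ∧ x ∉ S ∧ y ∉ S
  symm := fun _ _ h => ⟨G.symm h.1, h.2.2, h.2.1⟩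
  loopless := fun x h => G.loopless x h.1
  mem_of_adj := fun x y h => by
    obtain ⟨hx, hy⟩ := G.mem_of_adj h.1
    exact ⟨Finset.mem_sdiff.2 ⟨hx, h.2.1⟩, Finset.mem_sdiff.2 ⟨hy, h.2.2⟩⟩

/-- Delete a single vertex. -/
def deleteVert (G : NatGraph) (x : ℕ) : NatGraph := G.deleteVerts {x}

/-- Delete a single edge. -/
def deleteEdge (G : NatGraph) (x y : ℕ) : NatGraph where
  verts := G.verts
  Adj a b := G.Adj a b ∧ ¬((a = x ∧ b = y) ∨ (a = y ∧ b = x))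
  symm := fun _ _ h => ⟨G.symm h.1, fun hc => h.2 (by tauto)⟩
  loopless := fun a h => G.loopless a h.1
  mem_of_adj := fun _ _ h => G.mem_of_adj h.1

/-- Contraction of a vertex `u` with a vertex `v`: identify `u` with `v`
(deleting one copy of each resulting double edge). -/
def contract (G : NatGraph) (u v : ℕ) : NatGraph where
  verts := G.verts.erase u
  Adj a b := a ≠ b ∧ a ∈ G.verts.erase u ∧ b ∈ G.verts.erase u ∧
    ∃ p q, G.Adj p q ∧ (if p = u then v else p) = a ∧ (if q = u then v else q) = b
  symm := fun a b h => ⟨h.1.symm, h.2.2.1, h.2.1, by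
    obtain ⟨p, q, h1, h2, h3⟩ := h.2.2.2
    exact ⟨q, p, G.symm h1, h3, h2⟩⟩
  loopless := fun a h => h.1 rfl
  mem_of_adj := fun _ _ h => ⟨h.2.1, h.2.2.1⟩

/-- The number of connected components of a graph (on its vertex set). -/
noncomputable def numComponents (G : NatGraph) : ℕ :=
  Nat.card (SimpleGraph.induce (G.verts : Set ℕ) G.toSimpleGraph).ConnectedComponent

/-- A cycle is peripheral if it is induced (no two nonadjacent vertices of the
cycle are joined by an edge of `G`) and non-separating (deleting its vertices
does not increase the number of connected components). -/
def Peripheral (G : NatGraph) {a : ℕ} (C : G.toSimpleGraph.Walk a a) : Prop :=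
  C.IsCycle ∧
  (∀ x ∈ C.support, ∀ y ∈ C.support, G.Adj x y → s(x, y) ∈ C.edges) ∧
  (G.deleteVerts C.support.toFinset).numComponents ≤ G.numComponents

/-- A contraction of `u` with `v` is admissible if they have a common neighbor `w`
such that the path `(u, w, v)` is part of a peripheral cycle. -/
def AdmissibleContraction (G : NatGraph) (u v : ℕ) : Prop :=
  u ≠ v ∧ ∃ (w a : ℕ) (C : G.toSimpleGraph.Walk a a),
    G.Adj u w ∧ G.Adj w v ∧ G.Peripheral C ∧ s(u, w) ∈ C.edges ∧ s(w, v) ∈ C.edges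

/-- One step in the formation of a bipartite minor: deletion of a vertex,
deletion of an edge, or an admissible contraction. -/
inductive MinorStep : NatGraph → NatGraph → Prop
  | deleteVert (G : NatGraph) (x : ℕ) : MinorStep (G.deleteVert x) G
  | deleteEdge (G : NatGraph) (x y : ℕ) (h : G.Adj x y) : MinorStep (G.deleteEdge x y) G
  | contract (G : NatGraph) (u v : ℕ) (h : G.AdmissibleContraction u v) :
      MinorStep (G.contract u v) G

/-- `H` is a bipartite minor of `G` if it is obtained from `G` by a finite sequence
of vertex deletions, edge deletions, and admissible contractions. -/
def IsBipMinorOf (H G : NatGraph) : Prop := Relation.ReflTransGen MinorStep H G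

/-- `H` is a subgraph of `G`. -/
def IsSubgraphOf (H G : NatGraph) : Prop :=
  H.verts ⊆ G.verts ∧ ∀ ⦃x y⦄, H.Adj x y → G.Adj x y

/-- `G` is (a copy of) the complete bipartite graph `K_{m,n}`. -/
def IsCompleteBipartiteOn (G : NatGraph) (m n : ℕ) : Prop :=
  ∃ S T : Finset ℕ, S.card = m ∧ T.card = n ∧ Disjoint S T ∧ G.verts = S ∪ T ∧
    ∀ x y, G.Adj x y ↔ ((x ∈ S ∧ y ∈ T) ∨ (x ∈ T ∧ y ∈ S))

/-- `G` is (a copy of) the complete graph `K_n`. -/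
def IsCompleteOn (G : NatGraph) (n : ℕ) : Prop :=
  ∃ S : Finset ℕ, S.card = n ∧ G.verts = S ∧
    ∀ x y, G.Adj x y ↔ (x ∈ S ∧ y ∈ S ∧ x ≠ y)

/-- Witness data exhibiting `H` as a subdivision of `K` : for each edge `xy` of `K`,
`P x y` is the list of interior vertices of the path of `H` replacing `xy`. -/
structure IsSubdivDataOf (K H : NatGraph) (P : ℕ → ℕ → List ℕ) : Prop where
  verts_subset : K.verts ⊆ H.verts
  rev : ∀ ⦃x y⦄, K.Adj x y → P y x = (P x y).reverse
  interior_new : ∀ ⦃x y⦄, K.Adj x y → ∀ z ∈ P x y, z ∉ K.verts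
  nodup : ∀ ⦃x y⦄, K.Adj x y → (x :: (P x y ++ [y])).Nodup
  disj : ∀ ⦃x y a b⦄, K.Adj x y → K.Adj a b → s(x, y) ≠ s(a, b) →
    ∀ z ∈ P x y, z ∉ P a b
  verts_eq : (H.verts : Set ℕ) = ↑K.verts ∪ {z | ∃ x y, K.Adj x y ∧ z ∈ P x y}
  adj_iff : ∀ a b, H.Adj a b ↔ ∃ x y, K.Adj x y ∧ [a, b] <:+: (x :: (P x y ++ [y]))

/-- `H` is a subdivision of `K`. -/
def IsSubdivisionOf (H K : NatGraph) : Prop := ∃ P, IsSubdivDataOf K H P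

/-- `G` contains `K_{3,3}` as a bipartite minor. -/
def HasK33BipMinor (G : NatGraph) : Prop :=
  ∃ H : NatGraph, H.IsCompleteBipartiteOn 3 3 ∧ H.IsBipMinorOf G

end NatGraph


namespace NatGraph


theorem ext_graph {G H : NatGraph} (hv : G.verts = H.verts) (ha : G.Adj = H.Adj) : G = H := by
  cases G; cases H; cases hv; cases ha; rfl

@[reducible] def ofEdges (s : Finset ℕ) (E : List (ℕ × ℕ))
    (h : ∀ p ∈ E, p.1 ∈ s ∧ p.2 ∈ s ∧ p.1 ≠ p.2) : NatGraph where
  verts := s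
  Adj x y := (x, y) ∈ E ∨ (y, x) ∈ E
  symm := fun _ _ hxy => hxy.symm
  loopless := fun x hx => by rcases hx with hx | hx <;> exact (h _ hx).2.2 rfl
  mem_of_adj := fun x y hxy => by
    rcases hxy with hx | hx
    · exact ⟨(h _ hx).1, (h _ hx).2.1⟩
    · exact ⟨(h _ hx).2.1, (h _ hx).1⟩

theorem ofEdges_adj {s E h} {x y : ℕ} :
    (ofEdges s E h).Adj x y ↔ ((x, y) ∈ E ∨ (y, x) ∈ E) := Iff.rfl

def delE (S : Finset ℕ) (E : List (ℕ × ℕ)) : List (ℕ × ℕ) :=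
  E.filter fun p => decide (p.1 ∉ S) && decide (p.2 ∉ S)

theorem ofEdges_deleteVerts (s E h S h') :
    (ofEdges s E h).deleteVerts S = ofEdges (s \ S) (delE S E) h' := by
  refine ext_graph rfl ?_
  funext a b
  apply propext
  show ((a, b) ∈ E ∨ (b, a) ∈ E) ∧ a ∉ S ∧ b ∉ S ↔ _
  rw [ofEdges_adj]
  simp only [delE, List.mem_filter, Bool.and_eq_true, decide_eq_true_eq]
  tauto

def ren (u v x : ℕ) : ℕ := if x = u then v else x

theorem ren_mem {s : Finset ℕ} {u v x : ℕ} (hx : x ∈ s) (hv : v ∈ s) (hvu : v ≠ u) :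
    ren u v x ∈ s.erase u := by
  unfold ren; split
  · exact Finset.mem_erase.2 ⟨hvu, hv⟩
  · next hne => exact Finset.mem_erase.2 ⟨hne, hx⟩

def contractE (u v : ℕ) (E : List (ℕ × ℕ)) : List (ℕ × ℕ) :=
  (E.map fun p => (ren u v p.1, ren u v p.2)).filter fun p => decide (p.1 ≠ p.2)

theorem ofEdges_contract (s E h u v h') (hv : v ∈ s) (hvu : v ≠ u) :
    (ofEdges s E h).contract u v = ofEdges (s.erase u) (contractE u v E) h' := by
  refine ext_graph rfl ?_
  funext a b
  apply propext
  show (a ≠ b ∧ a ∈ s.erase u ∧ b ∈ s.erase u ∧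
      ∃ p q, (ofEdges s E h).Adj p q ∧ (if p = u then v else p) = a ∧
        (if q = u then v else q) = b) ↔ _
  rw [ofEdges_adj]
  constructor
  · rintro ⟨hab, ha, hb, p, q, hpq, hp, hq⟩
    rcases hpq with hE | hE
    · exact Or.inl (List.mem_filter.2 ⟨List.mem_map.2 ⟨(p, q), hE, by
        simp only [ren]; rw [hp, hq]⟩, decide_eq_true hab⟩)
    · exact Or.inr (List.mem_filter.2 ⟨List.mem_map.2 ⟨(q, p), hE, by
        simp only [ren]; rw [hp, hq]⟩, decide_eq_true (Ne.symm hab)⟩)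
  · rintro (hmem | hmem)
    · obtain ⟨hmap, hne⟩ := List.mem_filter.1 hmem
      obtain ⟨⟨p, q⟩, hE, heq⟩ := List.mem_map.1 hmap
      obtain ⟨heq1, heq2⟩ := Prod.mk.injEq .. ▸ heq
      have hab : a ≠ b := by simpa using of_decide_eq_true hne
      refine ⟨hab, ?_, ?_, p, q, Or.inl hE, heq1, heq2⟩
      · exact heq1 ▸ ren_mem (h _ hE).1 hv hvu
      · exact heq2 ▸ ren_mem (h _ hE).2.1 hv hvu
    · obtain ⟨hmap, hne⟩ := List.mem_filter.1 hmem
      obtain ⟨⟨p, q⟩, hE, heq⟩ := List.mem_map.1 hmap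
      obtain ⟨heq1, heq2⟩ := Prod.mk.injEq .. ▸ heq
      have hab : a ≠ b := by
        have : b ≠ a := by simpa using of_decide_eq_true hne
        exact this.symm
      refine ⟨hab, ?_, ?_, q, p, Or.inr hE, heq2, heq1⟩
      · exact heq2 ▸ ren_mem (h _ hE).2.1 hv hvu
      · exact heq1 ▸ ren_mem (h _ hE).1 hv hvu

theorem connected_induce_of_rank (G : NatGraph) (hub : ℕ) (r : ℕ → ℕ) (hhub : hub ∈ G.verts)
    (h : ∀ v ∈ G.verts, v ≠ hub → ∃ u ∈ G.verts, G.Adj v u ∧ r u < r v) :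
    (SimpleGraph.induce (G.verts : Set ℕ) G.toSimpleGraph).Connected := by
  rw [SimpleGraph.connected_iff]
  have hhub' : hub ∈ (G.verts : Set ℕ) := hhub
  have key : ∀ n v (hv : v ∈ (G.verts : Set ℕ)), r v ≤ n →
      (SimpleGraph.induce (G.verts : Set ℕ) G.toSimpleGraph).Reachable ⟨v, hv⟩ ⟨hub, hhub'⟩ := by
    intro n
    induction n with
    | zero =>
      intro v hv hr
      by_cases hveq : v = hub
      · subst hveq; rfl
      · obtain ⟨u, hu, hadj, hlt⟩ := h v hv hveq; omega
    | succ n ih =>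
      intro v hv hr
      by_cases hveq : v = hub
      · subst hveq; rfl
      · obtain ⟨u, hu, hadj, hlt⟩ := h v hv hveq
        have hu' : u ∈ (G.verts : Set ℕ) := hu
        have hadj' : (SimpleGraph.induce (G.verts : Set ℕ) G.toSimpleGraph).Adj ⟨v, hv⟩ ⟨u, hu'⟩ := hadj
        exact hadj'.reachable.trans (ih u hu' (by omega))
  refine ⟨fun x y => ?_, ⟨⟨hub, hhub'⟩⟩⟩
  exact (key _ x.1 x.2 le_rfl).trans (key _ y.1 y.2 le_rfl).symm

theorem numComponents_eq_one_of_connected {G : NatGraph}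
    (h : (SimpleGraph.induce (G.verts : Set ℕ) G.toSimpleGraph).Connected) :
    G.numComponents = 1 := by
  unfold numComponents
  rw [Nat.card_eq_one_iff_unique]
  constructor
  · constructor
    intro c d
    induction c using SimpleGraph.ConnectedComponent.ind with
    | _ u =>
    induction d using SimpleGraph.ConnectedComponent.ind with
    | _ v => exact SimpleGraph.ConnectedComponent.sound (h.preconnected u v)
  · obtain ⟨x⟩ := h.nonempty
    exact ⟨SimpleGraph.connectedComponentMk _ x⟩

theorem numComponents_of_rank (G : NatGraph) (hub : ℕ) (r : ℕ → ℕ) (hhub : hub ∈ G.verts)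
    (h : ∀ v ∈ G.verts, v ≠ hub → ∃ u ∈ G.verts, G.Adj v u ∧ r u < r v) :
    G.numComponents = 1 :=
  numComponents_eq_one_of_connected (connected_induce_of_rank G hub r hhub h)

section Map

variable {φ : ℕ → ℕ}

def mapG (φ : ℕ → ℕ) (hφ : Function.Injective φ) (G : NatGraph) : NatGraph where
  verts := G.verts.image φ
  Adj a b := ∃ p q, G.Adj p q ∧ φ p = a ∧ φ q = b
  symm := fun _ _ h => by
    obtain ⟨p, q, hpq, hp, hq⟩ := h
    exact ⟨q, p, G.symm hpq, hq, hp⟩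
  loopless := fun a h => by
    obtain ⟨p, q, hpq, hp, hq⟩ := h
    exact G.loopless p ((hφ (hp.trans hq.symm)) ▸ hpq)
  mem_of_adj := fun a b h => by
    obtain ⟨p, q, hpq, hp, hq⟩ := h
    obtain ⟨h1, h2⟩ := G.mem_of_adj hpq
    exact ⟨hp ▸ Finset.mem_image_of_mem φ h1, hq ▸ Finset.mem_image_of_mem φ h2⟩

theorem mapG_adj {G : NatGraph} {a b : ℕ} :
    (mapG φ hφ G).Adj a b ↔ ∃ p q, G.Adj p q ∧ φ p = a ∧ φ q = b := Iff.rfl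

theorem mem_image_iff (hφ : Function.Injective φ) {s : Finset ℕ} {x : ℕ} : φ x ∈ s.image φ ↔ x ∈ s := by
  constructor
  · intro h
    obtain ⟨y, hy, hyx⟩ := Finset.mem_image.1 h
    exact (hφ hyx) ▸ hy
  · exact Finset.mem_image_of_mem φ

theorem mapG_deleteVerts (hφ : Function.Injective φ) (G : NatGraph) (S : Finset ℕ) :
    mapG φ hφ (G.deleteVerts S) = (mapG φ hφ G).deleteVerts (S.image φ) := by
  refine ext_graph (Finset.image_sdiff _ _ hφ) ?_
  funext a b
  apply propext
  show (∃ p q, (G.Adj p q ∧ p ∉ S ∧ q ∉ S) ∧ φ p = a ∧ φ q = b) ↔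
    (∃ p q, G.Adj p q ∧ φ p = a ∧ φ q = b) ∧ a ∉ S.image φ ∧ b ∉ S.image φ
  constructor
  · rintro ⟨p, q, ⟨h1, h2, h3⟩, rfl, rfl⟩
    exact ⟨⟨p, q, h1, rfl, rfl⟩, fun hc => h2 ((mem_image_iff hφ).1 hc),
      fun hc => h3 ((mem_image_iff hφ).1 hc)⟩
  · rintro ⟨⟨p, q, h1, rfl, rfl⟩, h2, h3⟩
    exact ⟨p, q, ⟨h1, fun hc => h2 (Finset.mem_image_of_mem φ hc),
      fun hc => h3 (Finset.mem_image_of_mem φ hc)⟩, rfl, rfl⟩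

theorem mapG_deleteVert (hφ : Function.Injective φ) (G : NatGraph) (x : ℕ) :
    mapG φ hφ (G.deleteVert x) = (mapG φ hφ G).deleteVert (φ x) := by
  unfold deleteVert
  rw [mapG_deleteVerts hφ, Finset.image_singleton]

theorem phi_ren (hφ : Function.Injective φ) {u v : ℕ} (x : ℕ) :
    φ (ren u v x) = (if φ x = φ u then φ v else φ x) := by
  unfold ren
  by_cases h : x = u
  · subst h; simp
  · rw [if_neg h, if_neg (fun hc => h (hφ hc))]

theorem mapG_contract (hφ : Function.Injective φ) (G : NatGraph) {u v : ℕ} (hv : v ∈ G.verts) (hvu : v ≠ u) :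
    mapG φ hφ (G.contract u v) = (mapG φ hφ G).contract (φ u) (φ v) := by
  refine ext_graph (Finset.image_erase hφ _ _) ?_
  funext a b
  apply propext
  constructor
  · rintro ⟨p, q, ⟨hne, hpm, hqm, p', q', hA, hp', hq'⟩, rfl, rfl⟩
    refine ⟨fun hc => hne (hφ hc), ?_, ?_, φ p', φ q', ⟨p', q', hA, rfl, rfl⟩, ?_, ?_⟩
    · obtain ⟨h1, h2⟩ := Finset.mem_erase.1 hpm
      exact Finset.mem_erase.2 ⟨fun hc => h1 (hφ hc), Finset.mem_image_of_mem φ h2⟩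
    · obtain ⟨h1, h2⟩ := Finset.mem_erase.1 hqm
      exact Finset.mem_erase.2 ⟨fun hc => h1 (hφ hc), Finset.mem_image_of_mem φ h2⟩
    · rw [← phi_ren hφ]; show φ (ren u v p') = φ p; rw [show ren u v p' = p from hp']
    · rw [← phi_ren hφ]; show φ (ren u v q') = φ q; rw [show ren u v q' = q from hq']
  · rintro ⟨hab, ham, hbm, P, Q, ⟨p', q', hA, rfl, rfl⟩, hP, hQ⟩
    rw [← phi_ren hφ] at hP hQ
    refine ⟨ren u v p', ren u v q', ⟨?_, ?_, ?_, p', q', hA, rfl, rfl⟩, hP, hQ⟩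
    · intro hc; exact hab (by rw [← hP, ← hQ, hc])
    · exact ren_mem (G.mem_of_adj hA).1 hv hvu
    · exact ren_mem (G.mem_of_adj hA).2 hv hvu

def mapHom (hφ : Function.Injective φ) (G : NatGraph) : G.toSimpleGraph →g (mapG φ hφ G).toSimpleGraph where
  toFun := φ
  map_rel' := fun h => ⟨_, _, h, rfl, rfl⟩

noncomputable def mapIso (hφ : Function.Injective φ) (G : NatGraph) :
    (SimpleGraph.induce (G.verts : Set ℕ) G.toSimpleGraph) ≃g
      (SimpleGraph.induce (((mapG φ hφ G).verts : Finset ℕ) : Set ℕ) (mapG φ hφ G).toSimpleGraph) where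
  toEquiv := Equiv.ofBijective
    (fun x => ⟨φ x.1, Finset.mem_coe.2 (Finset.mem_image_of_mem φ (Finset.mem_coe.1 x.2))⟩)
    (by
      constructor
      · intro x y hxy
        exact Subtype.ext (hφ (congrArg Subtype.val hxy))
      · rintro ⟨y, hy⟩
        obtain ⟨x, hx, rfl⟩ := Finset.mem_image.1 (Finset.mem_coe.1 hy)
        exact ⟨⟨x, Finset.mem_coe.2 hx⟩, rfl⟩)
  map_rel_iff' := by
    rintro ⟨x, hx⟩ ⟨y, hy⟩
    show (∃ p q, G.Adj p q ∧ φ p = φ x ∧ φ q = φ y) ↔ G.Adj x y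
    constructor
    · rintro ⟨p, q, h, hp, hq⟩
      rw [← hφ hp, ← hφ hq]; exact h
    · intro h; exact ⟨x, y, h, rfl, rfl⟩

theorem numComponents_mapG (hφ : Function.Injective φ) (G : NatGraph) :
    (mapG φ hφ G).numComponents = G.numComponents :=
  (Nat.card_congr (SimpleGraph.Iso.connectedComponentEquiv (mapIso hφ G))).symm

theorem toFinset_map_list (φ : ℕ → ℕ) (l : List ℕ) : (l.map φ).toFinset = l.toFinset.image φ := by
  ext x; simp

theorem Peripheral.mapG' (hφ : Function.Injective φ) {G : NatGraph} {a : ℕ} {C : G.toSimpleGraph.Walk a a}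
    (h : G.Peripheral C) : (mapG φ hφ G).Peripheral (C.map (mapHom hφ G)) := by
  obtain ⟨hcyc, hind, hnum⟩ := h
  refine ⟨hcyc.map hφ, ?_, ?_⟩
  · intro x hx y hy hadj
    rw [SimpleGraph.Walk.support_map] at hx hy
    simp only [show ⇑(mapHom hφ G) = φ from rfl] at hx hy ⊢
    obtain ⟨p0, hp0, rfl⟩ := List.mem_map.1 hx
    obtain ⟨q0, hq0, rfl⟩ := List.mem_map.1 hy
    obtain ⟨p, q, hpq, hp, hq⟩ := hadj
    rw [hφ hp, hφ hq] at hpq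
    have := hind p0 hp0 q0 hq0 hpq
    rw [SimpleGraph.Walk.edges_map]
    have : Sym2.map φ s(p0, q0) ∈ C.edges.map (Sym2.map φ) := List.mem_map_of_mem this
    rwa [Sym2.map_pair_eq] at this
  · rw [SimpleGraph.Walk.support_map]
    show ((mapG φ hφ G).deleteVerts ((C.support.map φ).toFinset)).numComponents ≤ _
    rw [toFinset_map_list, ← mapG_deleteVerts hφ, numComponents_mapG hφ, numComponents_mapG hφ]
    exact hnum

theorem AdmissibleContraction.mapG' (hφ : Function.Injective φ) {G : NatGraph} {u v : ℕ}
    (h : G.AdmissibleContraction u v) :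
    (mapG φ hφ G).AdmissibleContraction (φ u) (φ v) := by
  obtain ⟨hne, w, a, C, h1, h2, h3, h4, h5⟩ := h
  refine ⟨fun hc => hne (hφ hc), φ w, φ a, C.map (mapHom hφ G),
    ⟨u, w, h1, rfl, rfl⟩, ⟨w, v, h2, rfl, rfl⟩, Peripheral.mapG' hφ h3, ?_, ?_⟩
  · show s(φ u, φ w) ∈ (C.map (mapHom hφ G)).edges
    rw [SimpleGraph.Walk.edges_map, ← Sym2.map_pair_eq φ u w]
    exact List.mem_map_of_mem h4
  · show s(φ w, φ v) ∈ (C.map (mapHom hφ G)).edges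
    rw [SimpleGraph.Walk.edges_map, ← Sym2.map_pair_eq φ w v]
    exact List.mem_map_of_mem h5

end Map


namespace K33C

abbrev E0 : List (ℕ × ℕ) := [(0,6),(6,3),(0,7),(7,4),(0,8),(8,5),
  (1,9),(9,3),(1,10),(10,4),(1,11),(11,5),
  (2,12),(12,3),(2,13),(13,4),(2,14),(14,5)]

abbrev V0 : Finset ℕ := Finset.range 15

abbrev C0 : NatGraph := ofEdges V0 E0 (by decide)

abbrev V1 : Finset ℕ := V0.erase 9
abbrev E1 : List (ℕ × ℕ) := contractE 9 6 E0
abbrev C1 : NatGraph := ofEdges V1 E1 (by decide)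

abbrev V2 : Finset ℕ := V1.erase 12
abbrev E2 : List (ℕ × ℕ) := contractE 12 6 E1
abbrev C2 : NatGraph := ofEdges V2 E2 (by decide)

abbrev V3 : Finset ℕ := V2 \ {3}
abbrev E3 : List (ℕ × ℕ) := delE {3} E2
abbrev C3 : NatGraph := ofEdges V3 E3 (by decide)

abbrev V4 : Finset ℕ := V3.erase 10
abbrev E4 : List (ℕ × ℕ) := contractE 10 7 E3
abbrev C4 : NatGraph := ofEdges V4 E4 (by decide)

abbrev V5 : Finset ℕ := V4.erase 13
abbrev E5 : List (ℕ × ℕ) := contractE 13 7 E4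
abbrev C5 : NatGraph := ofEdges V5 E5 (by decide)

abbrev V6 : Finset ℕ := V5 \ {4}
abbrev E6 : List (ℕ × ℕ) := delE {4} E5
abbrev C6 : NatGraph := ofEdges V6 E6 (by decide)

abbrev V7 : Finset ℕ := V6.erase 11
abbrev E7 : List (ℕ × ℕ) := contractE 11 8 E6
abbrev C7 : NatGraph := ofEdges V7 E7 (by decide)

abbrev V8 : Finset ℕ := V7.erase 14
abbrev E8 : List (ℕ × ℕ) := contractE 14 8 E7
abbrev C8 : NatGraph := ofEdges V8 E8 (by decide)

abbrev V9 : Finset ℕ := V8 \ {5}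
abbrev E9 : List (ℕ × ℕ) := delE {5} E8
abbrev C9 : NatGraph := ofEdges V9 E9 (by decide)

lemma adjC0 (x y : ℕ) (h : (x, y) ∈ E0 ∨ (y, x) ∈ E0) : C0.toSimpleGraph.Adj x y := h

lemma adjC1 (x y : ℕ) (h : (x, y) ∈ E1 ∨ (y, x) ∈ E1) : C1.toSimpleGraph.Adj x y := h

lemma adjC3 (x y : ℕ) (h : (x, y) ∈ E3 ∨ (y, x) ∈ E3) : C3.toSimpleGraph.Adj x y := h

lemma adjC4 (x y : ℕ) (h : (x, y) ∈ E4 ∨ (y, x) ∈ E4) : C4.toSimpleGraph.Adj x y := h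

lemma adjC6 (x y : ℕ) (h : (x, y) ∈ E6 ∨ (y, x) ∈ E6) : C6.toSimpleGraph.Adj x y := h

lemma adjC7 (x y : ℕ) (h : (x, y) ∈ E7 ∨ (y, x) ∈ E7) : C7.toSimpleGraph.Adj x y := h

abbrev cyc1 : C0.toSimpleGraph.Walk 6 6 :=
  .cons (adjC0 6 3 (by decide)) (.cons (adjC0 3 9 (by decide)) (.cons (adjC0 9 1 (by decide)) (.cons (adjC0 1 10 (by decide)) (.cons (adjC0 10 4 (by decide)) (.cons (adjC0 4 7 (by decide)) (.cons (adjC0 7 0 (by decide)) (.cons (adjC0 0 6 (by decide)) .nil)))))))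
abbrev cyc2 : C1.toSimpleGraph.Walk 6 6 :=
  .cons (adjC1 6 3 (by decide)) (.cons (adjC1 3 12 (by decide)) (.cons (adjC1 12 2 (by decide)) (.cons (adjC1 2 13 (by decide)) (.cons (adjC1 13 4 (by decide)) (.cons (adjC1 4 7 (by decide)) (.cons (adjC1 7 0 (by decide)) (.cons (adjC1 0 6 (by decide)) .nil)))))))
abbrev cyc4 : C3.toSimpleGraph.Walk 7 7 :=
  .cons (adjC3 7 4 (by decide)) (.cons (adjC3 4 10 (by decide)) (.cons (adjC3 10 1 (by decide)) (.cons (adjC3 1 11 (by decide)) (.cons (adjC3 11 5 (by decide)) (.cons (adjC3 5 8 (by decide)) (.cons (adjC3 8 0 (by decide)) (.cons (adjC3 0 7 (by decide)) .nil)))))))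
abbrev cyc5 : C4.toSimpleGraph.Walk 7 7 :=
  .cons (adjC4 7 4 (by decide)) (.cons (adjC4 4 13 (by decide)) (.cons (adjC4 13 2 (by decide)) (.cons (adjC4 2 14 (by decide)) (.cons (adjC4 14 5 (by decide)) (.cons (adjC4 5 8 (by decide)) (.cons (adjC4 8 0 (by decide)) (.cons (adjC4 0 7 (by decide)) .nil)))))))
abbrev cyc7 : C6.toSimpleGraph.Walk 8 8 :=
  .cons (adjC6 8 5 (by decide)) (.cons (adjC6 5 11 (by decide)) (.cons (adjC6 11 1 (by decide)) (.cons (adjC6 1 6 (by decide)) (.cons (adjC6 6 0 (by decide)) (.cons (adjC6 0 8 (by decide)) .nil)))))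
abbrev cyc8 : C7.toSimpleGraph.Walk 8 8 :=
  .cons (adjC7 8 5 (by decide)) (.cons (adjC7 5 14 (by decide)) (.cons (adjC7 14 2 (by decide)) (.cons (adjC7 2 6 (by decide)) (.cons (adjC7 6 0 (by decide)) (.cons (adjC7 0 8 (by decide)) .nil)))))

lemma per1 : C0.Peripheral cyc1 := by
  refine ⟨⟨⟨⟨by decide⟩, by simp⟩, by decide⟩, by decide, ?_⟩
  rw [ofEdges_deleteVerts _ _ _ _ (by decide),
    numComponents_of_rank _ 2 (fun v => ([2, 12, 13, 14, 5, 8, 11] : List ℕ).idxOf v) (by decide) (by decide),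
    numComponents_of_rank _ 0 (fun v => ([0, 6, 7, 8, 3, 4, 5, 9, 10, 11, 12, 13, 14, 1, 2] : List ℕ).idxOf v) (by decide) (by decide)]

lemma adm1 : C0.AdmissibleContraction 9 6 :=
  ⟨by decide, 3, 6, cyc1, by decide, by decide, per1, by decide, by decide⟩

lemma eq1 : C0.contract 9 6 = C1 :=
  ofEdges_contract _ _ _ _ _ _ (by decide) (by decide)


lemma per2 : C1.Peripheral cyc2 := by
  refine ⟨⟨⟨⟨by decide⟩, by simp⟩, by decide⟩, by decide, ?_⟩
  rw [ofEdges_deleteVerts _ _ _ _ (by decide),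
    numComponents_of_rank _ 1 (fun v => ([1, 10, 11, 5, 8, 14] : List ℕ).idxOf v) (by decide) (by decide),
    numComponents_of_rank _ 0 (fun v => ([0, 6, 7, 8, 1, 3, 4, 5, 10, 11, 12, 13, 14, 2] : List ℕ).idxOf v) (by decide) (by decide)]

lemma adm2 : C1.AdmissibleContraction 12 6 :=
  ⟨by decide, 3, 6, cyc2, by decide, by decide, per2, by decide, by decide⟩

lemma eq2 : C1.contract 12 6 = C2 :=
  ofEdges_contract _ _ _ _ _ _ (by decide) (by decide)


lemma eq3 : C2.deleteVert 3 = C3 := by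
  show C2.deleteVerts {3} = C3
  exact ofEdges_deleteVerts _ _ _ _ _


lemma per4 : C3.Peripheral cyc4 := by
  refine ⟨⟨⟨⟨by decide⟩, by simp⟩, by decide⟩, by decide, ?_⟩
  rw [ofEdges_deleteVerts _ _ _ _ (by decide),
    numComponents_of_rank _ 2 (fun v => ([2, 6, 13, 14] : List ℕ).idxOf v) (by decide) (by decide),
    numComponents_of_rank _ 0 (fun v => ([0, 6, 7, 8, 1, 2, 4, 5, 10, 11, 13, 14] : List ℕ).idxOf v) (by decide) (by decide)]

lemma adm4 : C3.AdmissibleContraction 10 7 :=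
  ⟨by decide, 4, 7, cyc4, by decide, by decide, per4, by decide, by decide⟩

lemma eq4 : C3.contract 10 7 = C4 :=
  ofEdges_contract _ _ _ _ _ _ (by decide) (by decide)


lemma per5 : C4.Peripheral cyc5 := by
  refine ⟨⟨⟨⟨by decide⟩, by simp⟩, by decide⟩, by decide, ?_⟩
  rw [ofEdges_deleteVerts _ _ _ _ (by decide),
    numComponents_of_rank _ 1 (fun v => ([1, 6, 11] : List ℕ).idxOf v) (by decide) (by decide),
    numComponents_of_rank _ 0 (fun v => ([0, 6, 7, 8, 1, 2, 4, 5, 11, 13, 14] : List ℕ).idxOf v) (by decide) (by decide)]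

lemma adm5 : C4.AdmissibleContraction 13 7 :=
  ⟨by decide, 4, 7, cyc5, by decide, by decide, per5, by decide, by decide⟩

lemma eq5 : C4.contract 13 7 = C5 :=
  ofEdges_contract _ _ _ _ _ _ (by decide) (by decide)


lemma eq6 : C5.deleteVert 4 = C6 := by
  show C5.deleteVerts {4} = C6
  exact ofEdges_deleteVerts _ _ _ _ _


lemma per7 : C6.Peripheral cyc7 := by
  refine ⟨⟨⟨⟨by decide⟩, by simp⟩, by decide⟩, by decide, ?_⟩
  rw [ofEdges_deleteVerts _ _ _ _ (by decide),
    numComponents_of_rank _ 2 (fun v => ([2, 7, 14] : List ℕ).idxOf v) (by decide) (by decide),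
    numComponents_of_rank _ 0 (fun v => ([0, 6, 7, 8, 1, 2, 5, 11, 14] : List ℕ).idxOf v) (by decide) (by decide)]

lemma adm7 : C6.AdmissibleContraction 11 8 :=
  ⟨by decide, 5, 8, cyc7, by decide, by decide, per7, by decide, by decide⟩

lemma eq7 : C6.contract 11 8 = C7 :=
  ofEdges_contract _ _ _ _ _ _ (by decide) (by decide)


lemma per8 : C7.Peripheral cyc8 := by
  refine ⟨⟨⟨⟨by decide⟩, by simp⟩, by decide⟩, by decide, ?_⟩
  rw [ofEdges_deleteVerts _ _ _ _ (by decide),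
    numComponents_of_rank _ 1 (fun v => ([1, 7] : List ℕ).idxOf v) (by decide) (by decide),
    numComponents_of_rank _ 0 (fun v => ([0, 6, 7, 8, 1, 2, 5, 14] : List ℕ).idxOf v) (by decide) (by decide)]

lemma adm8 : C7.AdmissibleContraction 14 8 :=
  ⟨by decide, 5, 8, cyc8, by decide, by decide, per8, by decide, by decide⟩

lemma eq8 : C7.contract 14 8 = C8 :=
  ofEdges_contract _ _ _ _ _ _ (by decide) (by decide)


lemma eq9 : C8.deleteVert 5 = C9 := by
  show C8.deleteVerts {5} = C9
  exact ofEdges_deleteVerts _ _ _ _ _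


lemma minorChain (φ : ℕ → ℕ) (hφ : Function.Injective φ) :
    Relation.ReflTransGen MinorStep (mapG φ hφ C9) (mapG φ hφ C0) := by
  have m1 : MinorStep (mapG φ hφ C1) (mapG φ hφ C0) := by
    rw [← eq1, mapG_contract hφ C0 (by decide) (by decide)]
    exact MinorStep.contract _ _ _ (AdmissibleContraction.mapG' hφ adm1)
  have m2 : MinorStep (mapG φ hφ C2) (mapG φ hφ C1) := by
    rw [← eq2, mapG_contract hφ C1 (by decide) (by decide)]
    exact MinorStep.contract _ _ _ (AdmissibleContraction.mapG' hφ adm2)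
  have m3 : MinorStep (mapG φ hφ C3) (mapG φ hφ C2) := by
    rw [← eq3, mapG_deleteVert hφ C2 3]
    exact MinorStep.deleteVert _ _
  have m4 : MinorStep (mapG φ hφ C4) (mapG φ hφ C3) := by
    rw [← eq4, mapG_contract hφ C3 (by decide) (by decide)]
    exact MinorStep.contract _ _ _ (AdmissibleContraction.mapG' hφ adm4)
  have m5 : MinorStep (mapG φ hφ C5) (mapG φ hφ C4) := by
    rw [← eq5, mapG_contract hφ C4 (by decide) (by decide)]
    exact MinorStep.contract _ _ _ (AdmissibleContraction.mapG' hφ adm5)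
  have m6 : MinorStep (mapG φ hφ C6) (mapG φ hφ C5) := by
    rw [← eq6, mapG_deleteVert hφ C5 4]
    exact MinorStep.deleteVert _ _
  have m7 : MinorStep (mapG φ hφ C7) (mapG φ hφ C6) := by
    rw [← eq7, mapG_contract hφ C6 (by decide) (by decide)]
    exact MinorStep.contract _ _ _ (AdmissibleContraction.mapG' hφ adm7)
  have m8 : MinorStep (mapG φ hφ C8) (mapG φ hφ C7) := by
    rw [← eq8, mapG_contract hφ C7 (by decide) (by decide)]
    exact MinorStep.contract _ _ _ (AdmissibleContraction.mapG' hφ adm8)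
  have m9 : MinorStep (mapG φ hφ C9) (mapG φ hφ C8) := by
    rw [← eq9, mapG_deleteVert hφ C8 5]
    exact MinorStep.deleteVert _ _
  exact (Relation.ReflTransGen.head m9 (Relation.ReflTransGen.head m8 (Relation.ReflTransGen.head m7 (Relation.ReflTransGen.head m6 (Relation.ReflTransGen.head m5 (Relation.ReflTransGen.head m4 (Relation.ReflTransGen.head m3 (Relation.ReflTransGen.head m2 (Relation.ReflTransGen.head m1 Relation.ReflTransGen.refl)))))))))


lemma k33final (φ : ℕ → ℕ) (hφ : Function.Injective φ) :
    (mapG φ hφ C9).IsCompleteBipartiteOn 3 3 := by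
  refine ⟨Finset.image φ {0,1,2}, Finset.image φ {6,7,8}, ?_, ?_, ?_, ?_, ?_⟩
  · rw [Finset.card_image_of_injective _ hφ]; decide
  · rw [Finset.card_image_of_injective _ hφ]; decide
  · rw [Finset.disjoint_left]
    rintro a ha hb
    obtain ⟨x, hx, rfl⟩ := Finset.mem_image.1 ha
    obtain ⟨y, hy, hyx⟩ := Finset.mem_image.1 hb
    have := hφ hyx
    subst this
    simp only [Finset.mem_insert, Finset.mem_singleton] at hx hy
    omega
  · show V9.image φ = _
    rw [show V9 = ({0,1,2} : Finset ℕ) ∪ ({6,7,8} : Finset ℕ) from by decide,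
      Finset.image_union]
  · intro x y
    constructor
    · rintro ⟨p, q, hpq, rfl, rfl⟩
      have aux : ∀ z ∈ E9, (z.1 ∈ ({0,1,2} : Finset ℕ) ∧ z.2 ∈ ({6,7,8} : Finset ℕ)) ∨
          (z.1 ∈ ({6,7,8} : Finset ℕ) ∧ z.2 ∈ ({0,1,2} : Finset ℕ)) := by decide
      rcases hpq with h | h
      · rcases aux _ h with ⟨h1, h2⟩ | ⟨h1, h2⟩
        · exact Or.inl ⟨Finset.mem_image_of_mem φ h1, Finset.mem_image_of_mem φ h2⟩
        · exact Or.inr ⟨Finset.mem_image_of_mem φ h1, Finset.mem_image_of_mem φ h2⟩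
      · rcases aux _ h with ⟨h1, h2⟩ | ⟨h1, h2⟩
        · exact Or.inr ⟨Finset.mem_image_of_mem φ h2, Finset.mem_image_of_mem φ h1⟩
        · exact Or.inl ⟨Finset.mem_image_of_mem φ h2, Finset.mem_image_of_mem φ h1⟩
    · have aux2 : ∀ p ∈ ({0,1,2} : Finset ℕ), ∀ q ∈ ({6,7,8} : Finset ℕ),
          ((p, q) ∈ E9 ∨ (q, p) ∈ E9) := by decide
      rintro (⟨hx, hy⟩ | ⟨hx, hy⟩)
      · obtain ⟨p, hp, rfl⟩ := Finset.mem_image.1 hx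
        obtain ⟨q, hq, rfl⟩ := Finset.mem_image.1 hy
        exact ⟨p, q, aux2 p hp q hq, rfl, rfl⟩
      · obtain ⟨q, hq, rfl⟩ := Finset.mem_image.1 hx
        obtain ⟨p, hp, rfl⟩ := Finset.mem_image.1 hy
        exact ⟨q, p, (aux2 p hp q hq).symm, rfl, rfl⟩

end K33C



def mkphi (L : List ℕ) (n : ℕ) : ℕ := L.getD n (n + (L.sum + 1))

theorem mkphi_inj {L : List ℕ} (h : L.Nodup) : Function.Injective (mkphi L) := by
  intro a b hab
  unfold mkphi at hab
  by_cases ha : a < L.length <;> by_cases hb : b < L.length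
  · rw [List.getD_eq_getElem _ _ ha, List.getD_eq_getElem _ _ hb] at hab
    exact h.getElem_inj_iff.1 hab
  · rw [List.getD_eq_getElem _ _ ha, List.getD_eq_default _ _ (le_of_not_gt hb)] at hab
    have h1 : L[a] ≤ L.sum := List.le_sum_of_mem (List.getElem_mem _)
    omega
  · rw [List.getD_eq_default _ _ (le_of_not_gt ha), List.getD_eq_getElem _ _ hb] at hab
    have h1 : L[b] ≤ L.sum := List.le_sum_of_mem (List.getElem_mem _)
    omega
  · rw [List.getD_eq_default _ _ (le_of_not_gt ha), List.getD_eq_default _ _ (le_of_not_gt hb)] at hab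
    omega

theorem infix_pair {a b x z y : ℕ} (h : [a, b] <:+: [x, z, y]) :
    (a = x ∧ b = z) ∨ (a = z ∧ b = y) := by
  obtain ⟨s, t, hst⟩ := h
  have hlen := congrArg List.length hst
  simp only [List.length_append, List.length_cons, List.length_nil] at hlen
  rcases s with _ | ⟨c, s⟩
  · rcases t with _ | ⟨e, t⟩
    · omega
    · rcases t with _ | ⟨f, t⟩
      · simp only [List.nil_append, List.cons_append] at hst
        injection hst with h1 hst
        injection hst with h2 hst
        exact Or.inl ⟨h1, h2⟩
      · simp only [List.length_cons] at hlen; omega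
  · rcases s with _ | ⟨d, s⟩
    · rcases t with _ | ⟨e, t⟩
      · simp only [List.cons_append, List.nil_append, List.append_nil] at hst
        injection hst with h1 hst
        injection hst with h2 hst
        injection hst with h3 hst
        exact Or.inr ⟨h2, h3⟩
      · simp only [List.length_cons] at hlen; omega
    · simp only [List.length_cons] at hlen; omega

theorem main_assembly (G K : NatGraph) (P : ℕ → ℕ → List ℕ)
    (hK : K.IsCompleteBipartiteOn 3 3) (hsub : NatGraph.IsSubdivDataOf K G P)
    (honce : ∀ x y : ℕ, K.Adj x y → (P x y).length = 1) :
    G.HasK33BipMinor := by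
  obtain ⟨S, T, hS, hT, hdisj, hverts, hadj⟩ := hK
  obtain ⟨s0, s1, s2, hs01, hs02, hs12, hSeq⟩ := Finset.card_eq_three.1 hS
  obtain ⟨t0, t1, t2, ht01, ht02, ht12, hTeq⟩ := Finset.card_eq_three.1 hT
  have hsm0 : s0 ∈ S := by rw [hSeq]; simp
  have hsm1 : s1 ∈ S := by rw [hSeq]; simp
  have hsm2 : s2 ∈ S := by rw [hSeq]; simp
  have htm0 : t0 ∈ T := by rw [hTeq]; simp
  have htm1 : t1 ∈ T := by rw [hTeq]; simp
  have htm2 : t2 ∈ T := by rw [hTeq]; simp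
  have hA00 : K.Adj s0 t0 := (hadj _ _).2 (Or.inl ⟨hsm0, htm0⟩)
  have hA01 : K.Adj s0 t1 := (hadj _ _).2 (Or.inl ⟨hsm0, htm1⟩)
  have hA02 : K.Adj s0 t2 := (hadj _ _).2 (Or.inl ⟨hsm0, htm2⟩)
  have hA10 : K.Adj s1 t0 := (hadj _ _).2 (Or.inl ⟨hsm1, htm0⟩)
  have hA11 : K.Adj s1 t1 := (hadj _ _).2 (Or.inl ⟨hsm1, htm1⟩)
  have hA12 : K.Adj s1 t2 := (hadj _ _).2 (Or.inl ⟨hsm1, htm2⟩)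
  have hA20 : K.Adj s2 t0 := (hadj _ _).2 (Or.inl ⟨hsm2, htm0⟩)
  have hA21 : K.Adj s2 t1 := (hadj _ _).2 (Or.inl ⟨hsm2, htm1⟩)
  have hA22 : K.Adj s2 t2 := (hadj _ _).2 (Or.inl ⟨hsm2, htm2⟩)
  obtain ⟨z00, hP00⟩ := List.length_eq_one_iff.1 (honce _ _ hA00)
  obtain ⟨z01, hP01⟩ := List.length_eq_one_iff.1 (honce _ _ hA01)
  obtain ⟨z02, hP02⟩ := List.length_eq_one_iff.1 (honce _ _ hA02)
  obtain ⟨z10, hP10⟩ := List.length_eq_one_iff.1 (honce _ _ hA10)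
  obtain ⟨z11, hP11⟩ := List.length_eq_one_iff.1 (honce _ _ hA11)
  obtain ⟨z12, hP12⟩ := List.length_eq_one_iff.1 (honce _ _ hA12)
  obtain ⟨z20, hP20⟩ := List.length_eq_one_iff.1 (honce _ _ hA20)
  obtain ⟨z21, hP21⟩ := List.length_eq_one_iff.1 (honce _ _ hA21)
  obtain ⟨z22, hP22⟩ := List.length_eq_one_iff.1 (honce _ _ hA22)
  have hKs0 : s0 ∈ K.verts := by rw [hverts]; exact Finset.mem_union_left _ hsm0
  have hKs1 : s1 ∈ K.verts := by rw [hverts]; exact Finset.mem_union_left _ hsm1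
  have hKs2 : s2 ∈ K.verts := by rw [hverts]; exact Finset.mem_union_left _ hsm2
  have hKt0 : t0 ∈ K.verts := by rw [hverts]; exact Finset.mem_union_right _ htm0
  have hKt1 : t1 ∈ K.verts := by rw [hverts]; exact Finset.mem_union_right _ htm1
  have hKt2 : t2 ∈ K.verts := by rw [hverts]; exact Finset.mem_union_right _ htm2
  have hst00 : s0 ≠ t0 := fun h => Finset.disjoint_left.1 hdisj hsm0 (by rw [h]; exact htm0)
  have hst01 : s0 ≠ t1 := fun h => Finset.disjoint_left.1 hdisj hsm0 (by rw [h]; exact htm1)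
  have hst02 : s0 ≠ t2 := fun h => Finset.disjoint_left.1 hdisj hsm0 (by rw [h]; exact htm2)
  have hst10 : s1 ≠ t0 := fun h => Finset.disjoint_left.1 hdisj hsm1 (by rw [h]; exact htm0)
  have hst11 : s1 ≠ t1 := fun h => Finset.disjoint_left.1 hdisj hsm1 (by rw [h]; exact htm1)
  have hst12 : s1 ≠ t2 := fun h => Finset.disjoint_left.1 hdisj hsm1 (by rw [h]; exact htm2)
  have hst20 : s2 ≠ t0 := fun h => Finset.disjoint_left.1 hdisj hsm2 (by rw [h]; exact htm0)
  have hst21 : s2 ≠ t1 := fun h => Finset.disjoint_left.1 hdisj hsm2 (by rw [h]; exact htm1)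
  have hst22 : s2 ≠ t2 := fun h => Finset.disjoint_left.1 hdisj hsm2 (by rw [h]; exact htm2)
  have hzK00 : z00 ∉ K.verts := hsub.interior_new hA00 _ (by rw [hP00]; exact List.mem_singleton_self _)
  have hzK01 : z01 ∉ K.verts := hsub.interior_new hA01 _ (by rw [hP01]; exact List.mem_singleton_self _)
  have hzK02 : z02 ∉ K.verts := hsub.interior_new hA02 _ (by rw [hP02]; exact List.mem_singleton_self _)
  have hzK10 : z10 ∉ K.verts := hsub.interior_new hA10 _ (by rw [hP10]; exact List.mem_singleton_self _)
  have hzK11 : z11 ∉ K.verts := hsub.interior_new hA11 _ (by rw [hP11]; exact List.mem_singleton_self _)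
  have hzK12 : z12 ∉ K.verts := hsub.interior_new hA12 _ (by rw [hP12]; exact List.mem_singleton_self _)
  have hzK20 : z20 ∉ K.verts := hsub.interior_new hA20 _ (by rw [hP20]; exact List.mem_singleton_self _)
  have hzK21 : z21 ∉ K.verts := hsub.interior_new hA21 _ (by rw [hP21]; exact List.mem_singleton_self _)
  have hzK22 : z22 ∉ K.verts := hsub.interior_new hA22 _ (by rw [hP22]; exact List.mem_singleton_self _)
  have hzs000 : z00 ≠ s0 := fun h => hzK00 (by rw [h]; exact hKs0)
  have hzt000 : z00 ≠ t0 := fun h => hzK00 (by rw [h]; exact hKt0)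
  have hzs001 : z00 ≠ s1 := fun h => hzK00 (by rw [h]; exact hKs1)
  have hzt001 : z00 ≠ t1 := fun h => hzK00 (by rw [h]; exact hKt1)
  have hzs002 : z00 ≠ s2 := fun h => hzK00 (by rw [h]; exact hKs2)
  have hzt002 : z00 ≠ t2 := fun h => hzK00 (by rw [h]; exact hKt2)
  have hzs010 : z01 ≠ s0 := fun h => hzK01 (by rw [h]; exact hKs0)
  have hzt010 : z01 ≠ t0 := fun h => hzK01 (by rw [h]; exact hKt0)
  have hzs011 : z01 ≠ s1 := fun h => hzK01 (by rw [h]; exact hKs1)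
  have hzt011 : z01 ≠ t1 := fun h => hzK01 (by rw [h]; exact hKt1)
  have hzs012 : z01 ≠ s2 := fun h => hzK01 (by rw [h]; exact hKs2)
  have hzt012 : z01 ≠ t2 := fun h => hzK01 (by rw [h]; exact hKt2)
  have hzs020 : z02 ≠ s0 := fun h => hzK02 (by rw [h]; exact hKs0)
  have hzt020 : z02 ≠ t0 := fun h => hzK02 (by rw [h]; exact hKt0)
  have hzs021 : z02 ≠ s1 := fun h => hzK02 (by rw [h]; exact hKs1)
  have hzt021 : z02 ≠ t1 := fun h => hzK02 (by rw [h]; exact hKt1)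
  have hzs022 : z02 ≠ s2 := fun h => hzK02 (by rw [h]; exact hKs2)
  have hzt022 : z02 ≠ t2 := fun h => hzK02 (by rw [h]; exact hKt2)
  have hzs100 : z10 ≠ s0 := fun h => hzK10 (by rw [h]; exact hKs0)
  have hzt100 : z10 ≠ t0 := fun h => hzK10 (by rw [h]; exact hKt0)
  have hzs101 : z10 ≠ s1 := fun h => hzK10 (by rw [h]; exact hKs1)
  have hzt101 : z10 ≠ t1 := fun h => hzK10 (by rw [h]; exact hKt1)
  have hzs102 : z10 ≠ s2 := fun h => hzK10 (by rw [h]; exact hKs2)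
  have hzt102 : z10 ≠ t2 := fun h => hzK10 (by rw [h]; exact hKt2)
  have hzs110 : z11 ≠ s0 := fun h => hzK11 (by rw [h]; exact hKs0)
  have hzt110 : z11 ≠ t0 := fun h => hzK11 (by rw [h]; exact hKt0)
  have hzs111 : z11 ≠ s1 := fun h => hzK11 (by rw [h]; exact hKs1)
  have hzt111 : z11 ≠ t1 := fun h => hzK11 (by rw [h]; exact hKt1)
  have hzs112 : z11 ≠ s2 := fun h => hzK11 (by rw [h]; exact hKs2)
  have hzt112 : z11 ≠ t2 := fun h => hzK11 (by rw [h]; exact hKt2)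
  have hzs120 : z12 ≠ s0 := fun h => hzK12 (by rw [h]; exact hKs0)
  have hzt120 : z12 ≠ t0 := fun h => hzK12 (by rw [h]; exact hKt0)
  have hzs121 : z12 ≠ s1 := fun h => hzK12 (by rw [h]; exact hKs1)
  have hzt121 : z12 ≠ t1 := fun h => hzK12 (by rw [h]; exact hKt1)
  have hzs122 : z12 ≠ s2 := fun h => hzK12 (by rw [h]; exact hKs2)
  have hzt122 : z12 ≠ t2 := fun h => hzK12 (by rw [h]; exact hKt2)
  have hzs200 : z20 ≠ s0 := fun h => hzK20 (by rw [h]; exact hKs0)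
  have hzt200 : z20 ≠ t0 := fun h => hzK20 (by rw [h]; exact hKt0)
  have hzs201 : z20 ≠ s1 := fun h => hzK20 (by rw [h]; exact hKs1)
  have hzt201 : z20 ≠ t1 := fun h => hzK20 (by rw [h]; exact hKt1)
  have hzs202 : z20 ≠ s2 := fun h => hzK20 (by rw [h]; exact hKs2)
  have hzt202 : z20 ≠ t2 := fun h => hzK20 (by rw [h]; exact hKt2)
  have hzs210 : z21 ≠ s0 := fun h => hzK21 (by rw [h]; exact hKs0)
  have hzt210 : z21 ≠ t0 := fun h => hzK21 (by rw [h]; exact hKt0)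
  have hzs211 : z21 ≠ s1 := fun h => hzK21 (by rw [h]; exact hKs1)
  have hzt211 : z21 ≠ t1 := fun h => hzK21 (by rw [h]; exact hKt1)
  have hzs212 : z21 ≠ s2 := fun h => hzK21 (by rw [h]; exact hKs2)
  have hzt212 : z21 ≠ t2 := fun h => hzK21 (by rw [h]; exact hKt2)
  have hzs220 : z22 ≠ s0 := fun h => hzK22 (by rw [h]; exact hKs0)
  have hzt220 : z22 ≠ t0 := fun h => hzK22 (by rw [h]; exact hKt0)
  have hzs221 : z22 ≠ s1 := fun h => hzK22 (by rw [h]; exact hKs1)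
  have hzt221 : z22 ≠ t1 := fun h => hzK22 (by rw [h]; exact hKt1)
  have hzs222 : z22 ≠ s2 := fun h => hzK22 (by rw [h]; exact hKs2)
  have hzt222 : z22 ≠ t2 := fun h => hzK22 (by rw [h]; exact hKt2)
  have hsym0001 : s(s0, t0) ≠ s(s0, t1) := by
    intro hc
    rcases Sym2.eq_iff.1 hc with ⟨h1, h2⟩ | ⟨h1, h2⟩
    · exact ht01 h2
    · exact hst01 h1
  have hzz0001 : z00 ≠ z01 := fun h =>
    (hsub.disj hA00 hA01 hsym0001 _ (by rw [hP00]; exact List.mem_singleton_self _))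
      (by rw [hP01, h]; exact List.mem_singleton_self _)
  have hsym0002 : s(s0, t0) ≠ s(s0, t2) := by
    intro hc
    rcases Sym2.eq_iff.1 hc with ⟨h1, h2⟩ | ⟨h1, h2⟩
    · exact ht02 h2
    · exact hst02 h1
  have hzz0002 : z00 ≠ z02 := fun h =>
    (hsub.disj hA00 hA02 hsym0002 _ (by rw [hP00]; exact List.mem_singleton_self _))
      (by rw [hP02, h]; exact List.mem_singleton_self _)
  have hsym0010 : s(s0, t0) ≠ s(s1, t0) := by
    intro hc
    rcases Sym2.eq_iff.1 hc with ⟨h1, h2⟩ | ⟨h1, h2⟩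
    · exact hs01 h1
    · exact hst00 h1
  have hzz0010 : z00 ≠ z10 := fun h =>
    (hsub.disj hA00 hA10 hsym0010 _ (by rw [hP00]; exact List.mem_singleton_self _))
      (by rw [hP10, h]; exact List.mem_singleton_self _)
  have hsym0011 : s(s0, t0) ≠ s(s1, t1) := by
    intro hc
    rcases Sym2.eq_iff.1 hc with ⟨h1, h2⟩ | ⟨h1, h2⟩
    · exact hs01 h1
    · exact hst01 h1
  have hzz0011 : z00 ≠ z11 := fun h =>
    (hsub.disj hA00 hA11 hsym0011 _ (by rw [hP00]; exact List.mem_singleton_self _))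
      (by rw [hP11, h]; exact List.mem_singleton_self _)
  have hsym0012 : s(s0, t0) ≠ s(s1, t2) := by
    intro hc
    rcases Sym2.eq_iff.1 hc with ⟨h1, h2⟩ | ⟨h1, h2⟩
    · exact hs01 h1
    · exact hst02 h1
  have hzz0012 : z00 ≠ z12 := fun h =>
    (hsub.disj hA00 hA12 hsym0012 _ (by rw [hP00]; exact List.mem_singleton_self _))
      (by rw [hP12, h]; exact List.mem_singleton_self _)
  have hsym0020 : s(s0, t0) ≠ s(s2, t0) := by
    intro hc
    rcases Sym2.eq_iff.1 hc with ⟨h1, h2⟩ | ⟨h1, h2⟩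
    · exact hs02 h1
    · exact hst00 h1
  have hzz0020 : z00 ≠ z20 := fun h =>
    (hsub.disj hA00 hA20 hsym0020 _ (by rw [hP00]; exact List.mem_singleton_self _))
      (by rw [hP20, h]; exact List.mem_singleton_self _)
  have hsym0021 : s(s0, t0) ≠ s(s2, t1) := by
    intro hc
    rcases Sym2.eq_iff.1 hc with ⟨h1, h2⟩ | ⟨h1, h2⟩
    · exact hs02 h1
    · exact hst01 h1
  have hzz0021 : z00 ≠ z21 := fun h =>
    (hsub.disj hA00 hA21 hsym0021 _ (by rw [hP00]; exact List.mem_singleton_self _))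
      (by rw [hP21, h]; exact List.mem_singleton_self _)
  have hsym0022 : s(s0, t0) ≠ s(s2, t2) := by
    intro hc
    rcases Sym2.eq_iff.1 hc with ⟨h1, h2⟩ | ⟨h1, h2⟩
    · exact hs02 h1
    · exact hst02 h1
  have hzz0022 : z00 ≠ z22 := fun h =>
    (hsub.disj hA00 hA22 hsym0022 _ (by rw [hP00]; exact List.mem_singleton_self _))
      (by rw [hP22, h]; exact List.mem_singleton_self _)
  have hsym0102 : s(s0, t1) ≠ s(s0, t2) := by
    intro hc
    rcases Sym2.eq_iff.1 hc with ⟨h1, h2⟩ | ⟨h1, h2⟩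
    · exact ht12 h2
    · exact hst02 h1
  have hzz0102 : z01 ≠ z02 := fun h =>
    (hsub.disj hA01 hA02 hsym0102 _ (by rw [hP01]; exact List.mem_singleton_self _))
      (by rw [hP02, h]; exact List.mem_singleton_self _)
  have hsym0110 : s(s0, t1) ≠ s(s1, t0) := by
    intro hc
    rcases Sym2.eq_iff.1 hc with ⟨h1, h2⟩ | ⟨h1, h2⟩
    · exact hs01 h1
    · exact hst00 h1
  have hzz0110 : z01 ≠ z10 := fun h =>
    (hsub.disj hA01 hA10 hsym0110 _ (by rw [hP01]; exact List.mem_singleton_self _))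
      (by rw [hP10, h]; exact List.mem_singleton_self _)
  have hsym0111 : s(s0, t1) ≠ s(s1, t1) := by
    intro hc
    rcases Sym2.eq_iff.1 hc with ⟨h1, h2⟩ | ⟨h1, h2⟩
    · exact hs01 h1
    · exact hst01 h1
  have hzz0111 : z01 ≠ z11 := fun h =>
    (hsub.disj hA01 hA11 hsym0111 _ (by rw [hP01]; exact List.mem_singleton_self _))
      (by rw [hP11, h]; exact List.mem_singleton_self _)
  have hsym0112 : s(s0, t1) ≠ s(s1, t2) := by
    intro hc
    rcases Sym2.eq_iff.1 hc with ⟨h1, h2⟩ | ⟨h1, h2⟩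
    · exact hs01 h1
    · exact hst02 h1
  have hzz0112 : z01 ≠ z12 := fun h =>
    (hsub.disj hA01 hA12 hsym0112 _ (by rw [hP01]; exact List.mem_singleton_self _))
      (by rw [hP12, h]; exact List.mem_singleton_self _)
  have hsym0120 : s(s0, t1) ≠ s(s2, t0) := by
    intro hc
    rcases Sym2.eq_iff.1 hc with ⟨h1, h2⟩ | ⟨h1, h2⟩
    · exact hs02 h1
    · exact hst00 h1
  have hzz0120 : z01 ≠ z20 := fun h =>
    (hsub.disj hA01 hA20 hsym0120 _ (by rw [hP01]; exact List.mem_singleton_self _))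
      (by rw [hP20, h]; exact List.mem_singleton_self _)
  have hsym0121 : s(s0, t1) ≠ s(s2, t1) := by
    intro hc
    rcases Sym2.eq_iff.1 hc with ⟨h1, h2⟩ | ⟨h1, h2⟩
    · exact hs02 h1
    · exact hst01 h1
  have hzz0121 : z01 ≠ z21 := fun h =>
    (hsub.disj hA01 hA21 hsym0121 _ (by rw [hP01]; exact List.mem_singleton_self _))
      (by rw [hP21, h]; exact List.mem_singleton_self _)
  have hsym0122 : s(s0, t1) ≠ s(s2, t2) := by
    intro hc
    rcases Sym2.eq_iff.1 hc with ⟨h1, h2⟩ | ⟨h1, h2⟩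
    · exact hs02 h1
    · exact hst02 h1
  have hzz0122 : z01 ≠ z22 := fun h =>
    (hsub.disj hA01 hA22 hsym0122 _ (by rw [hP01]; exact List.mem_singleton_self _))
      (by rw [hP22, h]; exact List.mem_singleton_self _)
  have hsym0210 : s(s0, t2) ≠ s(s1, t0) := by
    intro hc
    rcases Sym2.eq_iff.1 hc with ⟨h1, h2⟩ | ⟨h1, h2⟩
    · exact hs01 h1
    · exact hst00 h1
  have hzz0210 : z02 ≠ z10 := fun h =>
    (hsub.disj hA02 hA10 hsym0210 _ (by rw [hP02]; exact List.mem_singleton_self _))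
      (by rw [hP10, h]; exact List.mem_singleton_self _)
  have hsym0211 : s(s0, t2) ≠ s(s1, t1) := by
    intro hc
    rcases Sym2.eq_iff.1 hc with ⟨h1, h2⟩ | ⟨h1, h2⟩
    · exact hs01 h1
    · exact hst01 h1
  have hzz0211 : z02 ≠ z11 := fun h =>
    (hsub.disj hA02 hA11 hsym0211 _ (by rw [hP02]; exact List.mem_singleton_self _))
      (by rw [hP11, h]; exact List.mem_singleton_self _)
  have hsym0212 : s(s0, t2) ≠ s(s1, t2) := by
    intro hc
    rcases Sym2.eq_iff.1 hc with ⟨h1, h2⟩ | ⟨h1, h2⟩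
    · exact hs01 h1
    · exact hst02 h1
  have hzz0212 : z02 ≠ z12 := fun h =>
    (hsub.disj hA02 hA12 hsym0212 _ (by rw [hP02]; exact List.mem_singleton_self _))
      (by rw [hP12, h]; exact List.mem_singleton_self _)
  have hsym0220 : s(s0, t2) ≠ s(s2, t0) := by
    intro hc
    rcases Sym2.eq_iff.1 hc with ⟨h1, h2⟩ | ⟨h1, h2⟩
    · exact hs02 h1
    · exact hst00 h1
  have hzz0220 : z02 ≠ z20 := fun h =>
    (hsub.disj hA02 hA20 hsym0220 _ (by rw [hP02]; exact List.mem_singleton_self _))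
      (by rw [hP20, h]; exact List.mem_singleton_self _)
  have hsym0221 : s(s0, t2) ≠ s(s2, t1) := by
    intro hc
    rcases Sym2.eq_iff.1 hc with ⟨h1, h2⟩ | ⟨h1, h2⟩
    · exact hs02 h1
    · exact hst01 h1
  have hzz0221 : z02 ≠ z21 := fun h =>
    (hsub.disj hA02 hA21 hsym0221 _ (by rw [hP02]; exact List.mem_singleton_self _))
      (by rw [hP21, h]; exact List.mem_singleton_self _)
  have hsym0222 : s(s0, t2) ≠ s(s2, t2) := by
    intro hc
    rcases Sym2.eq_iff.1 hc with ⟨h1, h2⟩ | ⟨h1, h2⟩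
    · exact hs02 h1
    · exact hst02 h1
  have hzz0222 : z02 ≠ z22 := fun h =>
    (hsub.disj hA02 hA22 hsym0222 _ (by rw [hP02]; exact List.mem_singleton_self _))
      (by rw [hP22, h]; exact List.mem_singleton_self _)
  have hsym1011 : s(s1, t0) ≠ s(s1, t1) := by
    intro hc
    rcases Sym2.eq_iff.1 hc with ⟨h1, h2⟩ | ⟨h1, h2⟩
    · exact ht01 h2
    · exact hst11 h1
  have hzz1011 : z10 ≠ z11 := fun h =>
    (hsub.disj hA10 hA11 hsym1011 _ (by rw [hP10]; exact List.mem_singleton_self _))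
      (by rw [hP11, h]; exact List.mem_singleton_self _)
  have hsym1012 : s(s1, t0) ≠ s(s1, t2) := by
    intro hc
    rcases Sym2.eq_iff.1 hc with ⟨h1, h2⟩ | ⟨h1, h2⟩
    · exact ht02 h2
    · exact hst12 h1
  have hzz1012 : z10 ≠ z12 := fun h =>
    (hsub.disj hA10 hA12 hsym1012 _ (by rw [hP10]; exact List.mem_singleton_self _))
      (by rw [hP12, h]; exact List.mem_singleton_self _)
  have hsym1020 : s(s1, t0) ≠ s(s2, t0) := by
    intro hc
    rcases Sym2.eq_iff.1 hc with ⟨h1, h2⟩ | ⟨h1, h2⟩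
    · exact hs12 h1
    · exact hst10 h1
  have hzz1020 : z10 ≠ z20 := fun h =>
    (hsub.disj hA10 hA20 hsym1020 _ (by rw [hP10]; exact List.mem_singleton_self _))
      (by rw [hP20, h]; exact List.mem_singleton_self _)
  have hsym1021 : s(s1, t0) ≠ s(s2, t1) := by
    intro hc
    rcases Sym2.eq_iff.1 hc with ⟨h1, h2⟩ | ⟨h1, h2⟩
    · exact hs12 h1
    · exact hst11 h1
  have hzz1021 : z10 ≠ z21 := fun h =>
    (hsub.disj hA10 hA21 hsym1021 _ (by rw [hP10]; exact List.mem_singleton_self _))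
      (by rw [hP21, h]; exact List.mem_singleton_self _)
  have hsym1022 : s(s1, t0) ≠ s(s2, t2) := by
    intro hc
    rcases Sym2.eq_iff.1 hc with ⟨h1, h2⟩ | ⟨h1, h2⟩
    · exact hs12 h1
    · exact hst12 h1
  have hzz1022 : z10 ≠ z22 := fun h =>
    (hsub.disj hA10 hA22 hsym1022 _ (by rw [hP10]; exact List.mem_singleton_self _))
      (by rw [hP22, h]; exact List.mem_singleton_self _)
  have hsym1112 : s(s1, t1) ≠ s(s1, t2) := by
    intro hc
    rcases Sym2.eq_iff.1 hc with ⟨h1, h2⟩ | ⟨h1, h2⟩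
    · exact ht12 h2
    · exact hst12 h1
  have hzz1112 : z11 ≠ z12 := fun h =>
    (hsub.disj hA11 hA12 hsym1112 _ (by rw [hP11]; exact List.mem_singleton_self _))
      (by rw [hP12, h]; exact List.mem_singleton_self _)
  have hsym1120 : s(s1, t1) ≠ s(s2, t0) := by
    intro hc
    rcases Sym2.eq_iff.1 hc with ⟨h1, h2⟩ | ⟨h1, h2⟩
    · exact hs12 h1
    · exact hst10 h1
  have hzz1120 : z11 ≠ z20 := fun h =>
    (hsub.disj hA11 hA20 hsym1120 _ (by rw [hP11]; exact List.mem_singleton_self _))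
      (by rw [hP20, h]; exact List.mem_singleton_self _)
  have hsym1121 : s(s1, t1) ≠ s(s2, t1) := by
    intro hc
    rcases Sym2.eq_iff.1 hc with ⟨h1, h2⟩ | ⟨h1, h2⟩
    · exact hs12 h1
    · exact hst11 h1
  have hzz1121 : z11 ≠ z21 := fun h =>
    (hsub.disj hA11 hA21 hsym1121 _ (by rw [hP11]; exact List.mem_singleton_self _))
      (by rw [hP21, h]; exact List.mem_singleton_self _)
  have hsym1122 : s(s1, t1) ≠ s(s2, t2) := by
    intro hc
    rcases Sym2.eq_iff.1 hc with ⟨h1, h2⟩ | ⟨h1, h2⟩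
    · exact hs12 h1
    · exact hst12 h1
  have hzz1122 : z11 ≠ z22 := fun h =>
    (hsub.disj hA11 hA22 hsym1122 _ (by rw [hP11]; exact List.mem_singleton_self _))
      (by rw [hP22, h]; exact List.mem_singleton_self _)
  have hsym1220 : s(s1, t2) ≠ s(s2, t0) := by
    intro hc
    rcases Sym2.eq_iff.1 hc with ⟨h1, h2⟩ | ⟨h1, h2⟩
    · exact hs12 h1
    · exact hst10 h1
  have hzz1220 : z12 ≠ z20 := fun h =>
    (hsub.disj hA12 hA20 hsym1220 _ (by rw [hP12]; exact List.mem_singleton_self _))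
      (by rw [hP20, h]; exact List.mem_singleton_self _)
  have hsym1221 : s(s1, t2) ≠ s(s2, t1) := by
    intro hc
    rcases Sym2.eq_iff.1 hc with ⟨h1, h2⟩ | ⟨h1, h2⟩
    · exact hs12 h1
    · exact hst11 h1
  have hzz1221 : z12 ≠ z21 := fun h =>
    (hsub.disj hA12 hA21 hsym1221 _ (by rw [hP12]; exact List.mem_singleton_self _))
      (by rw [hP21, h]; exact List.mem_singleton_self _)
  have hsym1222 : s(s1, t2) ≠ s(s2, t2) := by
    intro hc
    rcases Sym2.eq_iff.1 hc with ⟨h1, h2⟩ | ⟨h1, h2⟩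
    · exact hs12 h1
    · exact hst12 h1
  have hzz1222 : z12 ≠ z22 := fun h =>
    (hsub.disj hA12 hA22 hsym1222 _ (by rw [hP12]; exact List.mem_singleton_self _))
      (by rw [hP22, h]; exact List.mem_singleton_self _)
  have hsym2021 : s(s2, t0) ≠ s(s2, t1) := by
    intro hc
    rcases Sym2.eq_iff.1 hc with ⟨h1, h2⟩ | ⟨h1, h2⟩
    · exact ht01 h2
    · exact hst21 h1
  have hzz2021 : z20 ≠ z21 := fun h =>
    (hsub.disj hA20 hA21 hsym2021 _ (by rw [hP20]; exact List.mem_singleton_self _))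
      (by rw [hP21, h]; exact List.mem_singleton_self _)
  have hsym2022 : s(s2, t0) ≠ s(s2, t2) := by
    intro hc
    rcases Sym2.eq_iff.1 hc with ⟨h1, h2⟩ | ⟨h1, h2⟩
    · exact ht02 h2
    · exact hst22 h1
  have hzz2022 : z20 ≠ z22 := fun h =>
    (hsub.disj hA20 hA22 hsym2022 _ (by rw [hP20]; exact List.mem_singleton_self _))
      (by rw [hP22, h]; exact List.mem_singleton_self _)
  have hsym2122 : s(s2, t1) ≠ s(s2, t2) := by
    intro hc
    rcases Sym2.eq_iff.1 hc with ⟨h1, h2⟩ | ⟨h1, h2⟩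
    · exact ht12 h2
    · exact hst22 h1
  have hzz2122 : z21 ≠ z22 := fun h =>
    (hsub.disj hA21 hA22 hsym2122 _ (by rw [hP21]; exact List.mem_singleton_self _))
      (by rw [hP22, h]; exact List.mem_singleton_self _)
  have hnd : ([s0, s1, s2, t0, t1, t2, z00, z01, z02, z10, z11, z12, z20, z21, z22] : List ℕ).Nodup := by
    refine List.nodup_cons.2 ⟨?_, ?_⟩
    · intro hmem
      simp only [List.mem_cons, List.not_mem_nil, or_false] at hmem
      rcases hmem with h|h|h|h|h|h|h|h|h|h|h|h|h|h
      exacts [hs01 h, hs02 h, hst00 h, hst01 h, hst02 h, (hzs000).symm h, (hzs010).symm h, (hzs020).symm h, (hzs100).symm h, (hzs110).symm h, (hzs120).symm h, (hzs200).symm h, (hzs210).symm h, (hzs220).symm h]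
    refine List.nodup_cons.2 ⟨?_, ?_⟩
    · intro hmem
      simp only [List.mem_cons, List.not_mem_nil, or_false] at hmem
      rcases hmem with h|h|h|h|h|h|h|h|h|h|h|h|h
      exacts [hs12 h, hst10 h, hst11 h, hst12 h, (hzs001).symm h, (hzs011).symm h, (hzs021).symm h, (hzs101).symm h, (hzs111).symm h, (hzs121).symm h, (hzs201).symm h, (hzs211).symm h, (hzs221).symm h]
    refine List.nodup_cons.2 ⟨?_, ?_⟩
    · intro hmem
      simp only [List.mem_cons, List.not_mem_nil, or_false] at hmem
      rcases hmem with h|h|h|h|h|h|h|h|h|h|h|h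
      exacts [hst20 h, hst21 h, hst22 h, (hzs002).symm h, (hzs012).symm h, (hzs022).symm h, (hzs102).symm h, (hzs112).symm h, (hzs122).symm h, (hzs202).symm h, (hzs212).symm h, (hzs222).symm h]
    refine List.nodup_cons.2 ⟨?_, ?_⟩
    · intro hmem
      simp only [List.mem_cons, List.not_mem_nil, or_false] at hmem
      rcases hmem with h|h|h|h|h|h|h|h|h|h|h
      exacts [ht01 h, ht02 h, (hzt000).symm h, (hzt010).symm h, (hzt020).symm h, (hzt100).symm h, (hzt110).symm h, (hzt120).symm h, (hzt200).symm h, (hzt210).symm h, (hzt220).symm h]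
    refine List.nodup_cons.2 ⟨?_, ?_⟩
    · intro hmem
      simp only [List.mem_cons, List.not_mem_nil, or_false] at hmem
      rcases hmem with h|h|h|h|h|h|h|h|h|h
      exacts [ht12 h, (hzt001).symm h, (hzt011).symm h, (hzt021).symm h, (hzt101).symm h, (hzt111).symm h, (hzt121).symm h, (hzt201).symm h, (hzt211).symm h, (hzt221).symm h]
    refine List.nodup_cons.2 ⟨?_, ?_⟩
    · intro hmem
      simp only [List.mem_cons, List.not_mem_nil, or_false] at hmem
      rcases hmem with h|h|h|h|h|h|h|h|h
      exacts [(hzt002).symm h, (hzt012).symm h, (hzt022).symm h, (hzt102).symm h, (hzt112).symm h, (hzt122).symm h, (hzt202).symm h, (hzt212).symm h, (hzt222).symm h]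
    refine List.nodup_cons.2 ⟨?_, ?_⟩
    · intro hmem
      simp only [List.mem_cons, List.not_mem_nil, or_false] at hmem
      rcases hmem with h|h|h|h|h|h|h|h
      exacts [hzz0001 h, hzz0002 h, hzz0010 h, hzz0011 h, hzz0012 h, hzz0020 h, hzz0021 h, hzz0022 h]
    refine List.nodup_cons.2 ⟨?_, ?_⟩
    · intro hmem
      simp only [List.mem_cons, List.not_mem_nil, or_false] at hmem
      rcases hmem with h|h|h|h|h|h|h
      exacts [hzz0102 h, hzz0110 h, hzz0111 h, hzz0112 h, hzz0120 h, hzz0121 h, hzz0122 h]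
    refine List.nodup_cons.2 ⟨?_, ?_⟩
    · intro hmem
      simp only [List.mem_cons, List.not_mem_nil, or_false] at hmem
      rcases hmem with h|h|h|h|h|h
      exacts [hzz0210 h, hzz0211 h, hzz0212 h, hzz0220 h, hzz0221 h, hzz0222 h]
    refine List.nodup_cons.2 ⟨?_, ?_⟩
    · intro hmem
      simp only [List.mem_cons, List.not_mem_nil, or_false] at hmem
      rcases hmem with h|h|h|h|h
      exacts [hzz1011 h, hzz1012 h, hzz1020 h, hzz1021 h, hzz1022 h]
    refine List.nodup_cons.2 ⟨?_, ?_⟩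
    · intro hmem
      simp only [List.mem_cons, List.not_mem_nil, or_false] at hmem
      rcases hmem with h|h|h|h
      exacts [hzz1112 h, hzz1120 h, hzz1121 h, hzz1122 h]
    refine List.nodup_cons.2 ⟨?_, ?_⟩
    · intro hmem
      simp only [List.mem_cons, List.not_mem_nil, or_false] at hmem
      rcases hmem with h|h|h
      exacts [hzz1220 h, hzz1221 h, hzz1222 h]
    refine List.nodup_cons.2 ⟨?_, ?_⟩
    · intro hmem
      simp only [List.mem_cons, List.not_mem_nil, or_false] at hmem
      rcases hmem with h|h
      exacts [hzz2021 h, hzz2022 h]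
    refine List.nodup_cons.2 ⟨?_, ?_⟩
    · intro hmem
      simp only [List.mem_cons, List.not_mem_nil, or_false] at hmem
      exact hzz2122 hmem
    exact List.nodup_singleton _
  have hφ : Function.Injective (mkphi [s0, s1, s2, t0, t1, t2, z00, z01, z02, z10, z11, z12, z20, z21, z22]) := mkphi_inj hnd
  set φ := mkphi [s0, s1, s2, t0, t1, t2, z00, z01, z02, z10, z11, z12, z20, z21, z22] with hφdef
  have hvertsG : G.verts = Finset.image φ (Finset.range 15) := by
    apply Finset.coe_injective
    rw [hsub.verts_eq]
    ext n
    simp only [Set.mem_union, Finset.coe_image, Set.mem_image, Finset.mem_coe,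
      Finset.mem_range, Set.mem_setOf_eq]
    constructor
    · rintro (hn | ⟨x, y, hxy, hz⟩)
      · rw [hverts] at hn
        rcases Finset.mem_union.1 hn with hn | hn
        · rw [hSeq] at hn
          simp only [Finset.mem_insert, Finset.mem_singleton] at hn
          rcases hn with rfl | rfl | rfl
          · exact ⟨0, by omega, rfl⟩
          · exact ⟨1, by omega, rfl⟩
          · exact ⟨2, by omega, rfl⟩
        · rw [hTeq] at hn
          simp only [Finset.mem_insert, Finset.mem_singleton] at hn
          rcases hn with rfl | rfl | rfl
          · exact ⟨3, by omega, rfl⟩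
          · exact ⟨4, by omega, rfl⟩
          · exact ⟨5, by omega, rfl⟩
      · rcases (hadj x y).1 hxy with ⟨hx, hy⟩ | ⟨hx, hy⟩
        · rw [hSeq] at hx
          rw [hTeq] at hy
          simp only [Finset.mem_insert, Finset.mem_singleton] at hx hy
          rcases hx with rfl | rfl | rfl <;> rcases hy with rfl | rfl | rfl
          · rw [hP00, List.mem_singleton] at hz
            subst hz
            exact ⟨6, by omega, rfl⟩
          · rw [hP01, List.mem_singleton] at hz
            subst hz
            exact ⟨7, by omega, rfl⟩
          · rw [hP02, List.mem_singleton] at hz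
            subst hz
            exact ⟨8, by omega, rfl⟩
          · rw [hP10, List.mem_singleton] at hz
            subst hz
            exact ⟨9, by omega, rfl⟩
          · rw [hP11, List.mem_singleton] at hz
            subst hz
            exact ⟨10, by omega, rfl⟩
          · rw [hP12, List.mem_singleton] at hz
            subst hz
            exact ⟨11, by omega, rfl⟩
          · rw [hP20, List.mem_singleton] at hz
            subst hz
            exact ⟨12, by omega, rfl⟩
          · rw [hP21, List.mem_singleton] at hz
            subst hz
            exact ⟨13, by omega, rfl⟩
          · rw [hP22, List.mem_singleton] at hz
            subst hz
            exact ⟨14, by omega, rfl⟩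
        · rw [hTeq] at hx
          rw [hSeq] at hy
          simp only [Finset.mem_insert, Finset.mem_singleton] at hx hy
          rcases hx with rfl | rfl | rfl <;> rcases hy with rfl | rfl | rfl
          · rw [hsub.rev hA00, hP00] at hz
            simp only [List.reverse_singleton, List.mem_singleton] at hz
            subst hz
            exact ⟨6, by omega, rfl⟩
          · rw [hsub.rev hA10, hP10] at hz
            simp only [List.reverse_singleton, List.mem_singleton] at hz
            subst hz
            exact ⟨9, by omega, rfl⟩
          · rw [hsub.rev hA20, hP20] at hz
            simp only [List.reverse_singleton, List.mem_singleton] at hz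
            subst hz
            exact ⟨12, by omega, rfl⟩
          · rw [hsub.rev hA01, hP01] at hz
            simp only [List.reverse_singleton, List.mem_singleton] at hz
            subst hz
            exact ⟨7, by omega, rfl⟩
          · rw [hsub.rev hA11, hP11] at hz
            simp only [List.reverse_singleton, List.mem_singleton] at hz
            subst hz
            exact ⟨10, by omega, rfl⟩
          · rw [hsub.rev hA21, hP21] at hz
            simp only [List.reverse_singleton, List.mem_singleton] at hz
            subst hz
            exact ⟨13, by omega, rfl⟩
          · rw [hsub.rev hA02, hP02] at hz
            simp only [List.reverse_singleton, List.mem_singleton] at hz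
            subst hz
            exact ⟨8, by omega, rfl⟩
          · rw [hsub.rev hA12, hP12] at hz
            simp only [List.reverse_singleton, List.mem_singleton] at hz
            subst hz
            exact ⟨11, by omega, rfl⟩
          · rw [hsub.rev hA22, hP22] at hz
            simp only [List.reverse_singleton, List.mem_singleton] at hz
            subst hz
            exact ⟨14, by omega, rfl⟩
    · rintro ⟨k, hk, rfl⟩
      interval_cases k
      · exact Or.inl hKs0
      · exact Or.inl hKs1
      · exact Or.inl hKs2
      · exact Or.inl hKt0
      · exact Or.inl hKt1
      · exact Or.inl hKt2
      · exact Or.inr ⟨s0, t0, hA00, by rw [hP00]; exact List.mem_singleton_self _⟩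
      · exact Or.inr ⟨s0, t1, hA01, by rw [hP01]; exact List.mem_singleton_self _⟩
      · exact Or.inr ⟨s0, t2, hA02, by rw [hP02]; exact List.mem_singleton_self _⟩
      · exact Or.inr ⟨s1, t0, hA10, by rw [hP10]; exact List.mem_singleton_self _⟩
      · exact Or.inr ⟨s1, t1, hA11, by rw [hP11]; exact List.mem_singleton_self _⟩
      · exact Or.inr ⟨s1, t2, hA12, by rw [hP12]; exact List.mem_singleton_self _⟩
      · exact Or.inr ⟨s2, t0, hA20, by rw [hP20]; exact List.mem_singleton_self _⟩
      · exact Or.inr ⟨s2, t1, hA21, by rw [hP21]; exact List.mem_singleton_self _⟩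
      · exact Or.inr ⟨s2, t2, hA22, by rw [hP22]; exact List.mem_singleton_self _⟩
  have hfwd : ∀ a b, G.Adj a b → (mapG φ hφ K33C.C0).Adj a b := by
    intro a b hab
    obtain ⟨x, y, hxy, hinf⟩ := (hsub.adj_iff a b).1 hab
    rcases (hadj x y).1 hxy with ⟨hx, hy⟩ | ⟨hx, hy⟩
    · rw [hSeq] at hx
      rw [hTeq] at hy
      simp only [Finset.mem_insert, Finset.mem_singleton] at hx hy
      rcases hx with rfl | rfl | rfl <;> rcases hy with rfl | rfl | rfl
      · rw [hP00] at hinf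
        rcases infix_pair hinf with ⟨rfl, rfl⟩ | ⟨rfl, rfl⟩
        · exact ⟨0, 6, by decide, rfl, rfl⟩
        · exact ⟨6, 3, by decide, rfl, rfl⟩
      · rw [hP01] at hinf
        rcases infix_pair hinf with ⟨rfl, rfl⟩ | ⟨rfl, rfl⟩
        · exact ⟨0, 7, by decide, rfl, rfl⟩
        · exact ⟨7, 4, by decide, rfl, rfl⟩
      · rw [hP02] at hinf
        rcases infix_pair hinf with ⟨rfl, rfl⟩ | ⟨rfl, rfl⟩
        · exact ⟨0, 8, by decide, rfl, rfl⟩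
        · exact ⟨8, 5, by decide, rfl, rfl⟩
      · rw [hP10] at hinf
        rcases infix_pair hinf with ⟨rfl, rfl⟩ | ⟨rfl, rfl⟩
        · exact ⟨1, 9, by decide, rfl, rfl⟩
        · exact ⟨9, 3, by decide, rfl, rfl⟩
      · rw [hP11] at hinf
        rcases infix_pair hinf with ⟨rfl, rfl⟩ | ⟨rfl, rfl⟩
        · exact ⟨1, 10, by decide, rfl, rfl⟩
        · exact ⟨10, 4, by decide, rfl, rfl⟩
      · rw [hP12] at hinf
        rcases infix_pair hinf with ⟨rfl, rfl⟩ | ⟨rfl, rfl⟩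
        · exact ⟨1, 11, by decide, rfl, rfl⟩
        · exact ⟨11, 5, by decide, rfl, rfl⟩
      · rw [hP20] at hinf
        rcases infix_pair hinf with ⟨rfl, rfl⟩ | ⟨rfl, rfl⟩
        · exact ⟨2, 12, by decide, rfl, rfl⟩
        · exact ⟨12, 3, by decide, rfl, rfl⟩
      · rw [hP21] at hinf
        rcases infix_pair hinf with ⟨rfl, rfl⟩ | ⟨rfl, rfl⟩
        · exact ⟨2, 13, by decide, rfl, rfl⟩
        · exact ⟨13, 4, by decide, rfl, rfl⟩
      · rw [hP22] at hinf
        rcases infix_pair hinf with ⟨rfl, rfl⟩ | ⟨rfl, rfl⟩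
        · exact ⟨2, 14, by decide, rfl, rfl⟩
        · exact ⟨14, 5, by decide, rfl, rfl⟩
    · rw [hTeq] at hx
      rw [hSeq] at hy
      simp only [Finset.mem_insert, Finset.mem_singleton] at hx hy
      rcases hx with rfl | rfl | rfl <;> rcases hy with rfl | rfl | rfl
      · rw [hsub.rev hA00, hP00] at hinf
        simp only [List.reverse_singleton] at hinf
        rcases infix_pair hinf with ⟨rfl, rfl⟩ | ⟨rfl, rfl⟩
        · exact ⟨3, 6, by decide, rfl, rfl⟩
        · exact ⟨6, 0, by decide, rfl, rfl⟩
      · rw [hsub.rev hA10, hP10] at hinf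
        simp only [List.reverse_singleton] at hinf
        rcases infix_pair hinf with ⟨rfl, rfl⟩ | ⟨rfl, rfl⟩
        · exact ⟨3, 9, by decide, rfl, rfl⟩
        · exact ⟨9, 1, by decide, rfl, rfl⟩
      · rw [hsub.rev hA20, hP20] at hinf
        simp only [List.reverse_singleton] at hinf
        rcases infix_pair hinf with ⟨rfl, rfl⟩ | ⟨rfl, rfl⟩
        · exact ⟨3, 12, by decide, rfl, rfl⟩
        · exact ⟨12, 2, by decide, rfl, rfl⟩
      · rw [hsub.rev hA01, hP01] at hinf
        simp only [List.reverse_singleton] at hinf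
        rcases infix_pair hinf with ⟨rfl, rfl⟩ | ⟨rfl, rfl⟩
        · exact ⟨4, 7, by decide, rfl, rfl⟩
        · exact ⟨7, 0, by decide, rfl, rfl⟩
      · rw [hsub.rev hA11, hP11] at hinf
        simp only [List.reverse_singleton] at hinf
        rcases infix_pair hinf with ⟨rfl, rfl⟩ | ⟨rfl, rfl⟩
        · exact ⟨4, 10, by decide, rfl, rfl⟩
        · exact ⟨10, 1, by decide, rfl, rfl⟩
      · rw [hsub.rev hA21, hP21] at hinf
        simp only [List.reverse_singleton] at hinf
        rcases infix_pair hinf with ⟨rfl, rfl⟩ | ⟨rfl, rfl⟩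
        · exact ⟨4, 13, by decide, rfl, rfl⟩
        · exact ⟨13, 2, by decide, rfl, rfl⟩
      · rw [hsub.rev hA02, hP02] at hinf
        simp only [List.reverse_singleton] at hinf
        rcases infix_pair hinf with ⟨rfl, rfl⟩ | ⟨rfl, rfl⟩
        · exact ⟨5, 8, by decide, rfl, rfl⟩
        · exact ⟨8, 0, by decide, rfl, rfl⟩
      · rw [hsub.rev hA12, hP12] at hinf
        simp only [List.reverse_singleton] at hinf
        rcases infix_pair hinf with ⟨rfl, rfl⟩ | ⟨rfl, rfl⟩
        · exact ⟨5, 11, by decide, rfl, rfl⟩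
        · exact ⟨11, 1, by decide, rfl, rfl⟩
      · rw [hsub.rev hA22, hP22] at hinf
        simp only [List.reverse_singleton] at hinf
        rcases infix_pair hinf with ⟨rfl, rfl⟩ | ⟨rfl, rfl⟩
        · exact ⟨5, 14, by decide, rfl, rfl⟩
        · exact ⟨14, 2, by decide, rfl, rfl⟩
  have hbwd : ∀ p q : ℕ, (p, q) ∈ K33C.E0 → G.Adj (φ p) (φ q) := by
    intro p q hpq
    simp only [List.mem_cons, List.not_mem_nil, or_false, Prod.mk.injEq] at hpq
    rcases hpq with ⟨rfl, rfl⟩|⟨rfl, rfl⟩|⟨rfl, rfl⟩|⟨rfl, rfl⟩|⟨rfl, rfl⟩|⟨rfl, rfl⟩|⟨rfl, rfl⟩|⟨rfl, rfl⟩|⟨rfl, rfl⟩|⟨rfl, rfl⟩|⟨rfl, rfl⟩|⟨rfl, rfl⟩|⟨rfl, rfl⟩|⟨rfl, rfl⟩|⟨rfl, rfl⟩|⟨rfl, rfl⟩|⟨rfl, rfl⟩|⟨rfl, rfl⟩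
    exacts [(hsub.adj_iff _ _).2 ⟨s0, t0, hA00, by rw [hP00]; exact ⟨[], [t0], rfl⟩⟩,
(hsub.adj_iff _ _).2 ⟨s0, t0, hA00, by rw [hP00]; exact ⟨[s0], [], rfl⟩⟩,
(hsub.adj_iff _ _).2 ⟨s0, t1, hA01, by rw [hP01]; exact ⟨[], [t1], rfl⟩⟩,
(hsub.adj_iff _ _).2 ⟨s0, t1, hA01, by rw [hP01]; exact ⟨[s0], [], rfl⟩⟩,
(hsub.adj_iff _ _).2 ⟨s0, t2, hA02, by rw [hP02]; exact ⟨[], [t2], rfl⟩⟩,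
(hsub.adj_iff _ _).2 ⟨s0, t2, hA02, by rw [hP02]; exact ⟨[s0], [], rfl⟩⟩,
(hsub.adj_iff _ _).2 ⟨s1, t0, hA10, by rw [hP10]; exact ⟨[], [t0], rfl⟩⟩,
(hsub.adj_iff _ _).2 ⟨s1, t0, hA10, by rw [hP10]; exact ⟨[s1], [], rfl⟩⟩,
(hsub.adj_iff _ _).2 ⟨s1, t1, hA11, by rw [hP11]; exact ⟨[], [t1], rfl⟩⟩,
(hsub.adj_iff _ _).2 ⟨s1, t1, hA11, by rw [hP11]; exact ⟨[s1], [], rfl⟩⟩,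
(hsub.adj_iff _ _).2 ⟨s1, t2, hA12, by rw [hP12]; exact ⟨[], [t2], rfl⟩⟩,
(hsub.adj_iff _ _).2 ⟨s1, t2, hA12, by rw [hP12]; exact ⟨[s1], [], rfl⟩⟩,
(hsub.adj_iff _ _).2 ⟨s2, t0, hA20, by rw [hP20]; exact ⟨[], [t0], rfl⟩⟩,
(hsub.adj_iff _ _).2 ⟨s2, t0, hA20, by rw [hP20]; exact ⟨[s2], [], rfl⟩⟩,
(hsub.adj_iff _ _).2 ⟨s2, t1, hA21, by rw [hP21]; exact ⟨[], [t1], rfl⟩⟩,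
(hsub.adj_iff _ _).2 ⟨s2, t1, hA21, by rw [hP21]; exact ⟨[s2], [], rfl⟩⟩,
(hsub.adj_iff _ _).2 ⟨s2, t2, hA22, by rw [hP22]; exact ⟨[], [t2], rfl⟩⟩,
(hsub.adj_iff _ _).2 ⟨s2, t2, hA22, by rw [hP22]; exact ⟨[s2], [], rfl⟩⟩]
  have hGeq : G = mapG φ hφ K33C.C0 := by
    refine ext_graph hvertsG ?_
    funext a b
    apply propext
    constructor
    · exact hfwd a b
    · rintro ⟨p, q, hpq, rfl, rfl⟩
      rcases hpq with h | h
      · exact hbwd p q h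
      · exact G.symm (hbwd q p h)
  refine ⟨mapG φ hφ K33C.C9, K33C.k33final φ hφ, ?_⟩
  show Relation.ReflTransGen MinorStep _ _
  rw [hGeq]
  exact K33C.minorChain φ hφ


end NatGraph

/-- `K₃,₃` is a bipartite minor of the barycentric subdivision of `K₃,₃`,
i.e., of the graph obtained from `K₃,₃` by subdividing every edge exactly once. -/
theorem k33_minor_of_barycentric_K33 (G K : NatGraph) (P : ℕ → ℕ → List ℕ)
    (hK : K.IsCompleteBipartiteOn 3 3) (hsub : NatGraph.IsSubdivDataOf K G P)
    (honce : ∀ x y : ℕ, K.Adj x y → (P x y).length = 1) :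
    G.HasK33BipMinor :=
  NatGraph.main_assembly G K P hK hsub honce
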